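/- Let φ: (M²,g) → (N,h) be a smooth map from a Riemannian surface. If the biharmonic stress-energy tensor S₂ vanishes identically, then φ is harmonic (τ(φ) = 0). Indeed, on a 2-dimensional domain, trace S₂ = |τ(φ)|². -/
import Mathlib


open scoped RealInnerProductSpace
noncomputable section

/-- A fixed orthonormal frame of the (model) tangent space of the `m`-dimensional
Riemannian manifold `M`. -/
def onb (m : ℕ) : OrthonormalBasis (Fin m) ℝ (EuclideanSpace ℝ (Fin m)) :=
  EuclideanSpace.basisFun (Fin m) ℝ

/-- The biharmonic stress-energy tensor
`S₂(X,Y) = ½|τ(φ)|² ⟨X,Y⟩ + ⟨dφ,∇τ(φ)⟩ ⟨X,Y⟩ − ⟨dφ(X),∇_Y τ(φ)⟩ − ⟨dφ(Y),∇_X τ(φ)⟩`,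
expressed pointwise in terms of the differential `dphi` of `φ`, the tension field `tau`
and its covariant derivative `Dtau` (the trace `⟨dφ,∇τ(φ)⟩` being computed in an
orthonormal frame). -/
def S2 {m : ℕ} {F : Type*} [NormedAddCommGroup F] [InnerProductSpace ℝ F]
    (dphi : EuclideanSpace ℝ (Fin m) →ₗ[ℝ] F) (tau : F)
    (Dtau : EuclideanSpace ℝ (Fin m) →ₗ[ℝ] F)
    (X Y : EuclideanSpace ℝ (Fin m)) : ℝ :=
  (1 / 2 : ℝ) * ‖tau‖ ^ 2 * ⟪X, Y⟫
    + (∑ i, ⟪dphi (onb m i), Dtau (onb m i)⟫) * ⟪X, Y⟫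
    - ⟪dphi X, Dtau Y⟫ - ⟪dphi Y, Dtau X⟫

lemma trace_eq {F : Type*} [NormedAddCommGroup F] [InnerProductSpace ℝ F]
    (dphi : EuclideanSpace ℝ (Fin 2) →ₗ[ℝ] F) (tau : F)
    (Dtau : EuclideanSpace ℝ (Fin 2) →ₗ[ℝ] F) :
    ∑ i, S2 dphi tau Dtau (onb 2 i) (onb 2 i) = ‖tau‖ ^ 2 := by
  have h : ∀ i : Fin 2, ⟪onb 2 i, onb 2 i⟫ = (1 : ℝ) := fun i => by
    rw [real_inner_self_eq_norm_sq, (onb 2).orthonormal.1 i]; norm_num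
  simp only [S2, h, mul_one, Fin.sum_univ_two]
  ring

/-- For a map `φ : (M²,g) → (N,h)` from a surface, the trace of the
stress-energy tensor is `trace S₂ = |τ(φ)|²`; hence `S₂ = 0` implies that `φ` is
harmonic (`τ(φ) = 0`). -/
theorem surface_S2_zero_harmonic
    (M : Type*) (F : Type*) [NormedAddCommGroup F] [InnerProductSpace ℝ F]
    (dphi : M → EuclideanSpace ℝ (Fin 2) →ₗ[ℝ] F)
    (tau : M → F)
    (Dtau : M → EuclideanSpace ℝ (Fin 2) →ₗ[ℝ] F) :
    (∀ p, ∑ i, S2 (dphi p) (tau p) (Dtau p) (onb 2 i) (onb 2 i) = ‖tau p‖ ^ 2) ∧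
    ((∀ p X Y, S2 (dphi p) (tau p) (Dtau p) X Y = 0) → ∀ p, tau p = 0) := by
  refine ⟨fun p => trace_eq _ _ _, fun h p => ?_⟩
  have := trace_eq (dphi p) (tau p) (Dtau p)
  rw [Finset.sum_congr rfl (fun i _ => h p (onb 2 i) (onb 2 i)),
    Finset.sum_const_zero] at this
  have : ‖tau p‖ = 0 := by nlinarith [norm_nonneg (tau p)]
  simpa using this
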